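/- Let a, b : [−π, π] → ℝ be continuous with b everywhere strictly positive. Then lim_{ε→0⁺} √ε · ∫_{−π}^{π} (a(θ)/b(θ)) · 1/(ε + b(θ)θ²) dθ = (a(0)/b(0)) · π/√(b(0)). -/

import Mathlib

open MeasureTheory Filter Set Real

theorem sqrt_eps_limit (a b : ℝ → ℝ)
    (ha : ContinuousOn a (Set.Icc (-Real.pi) Real.pi))
    (hb : ContinuousOn b (Set.Icc (-Real.pi) Real.pi))
    (hbpos : ∀ θ ∈ Set.Icc (-Real.pi) Real.pi, 0 < b θ) :
    Filter.Tendsto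
      (fun ε : ℝ => Real.sqrt ε *
        ∫ θ in (-Real.pi)..Real.pi, (a θ / b θ) * (1 / (ε + b θ * θ ^ 2)))
      (nhdsWithin 0 (Set.Ioi 0))
      (nhds ((a 0 / b 0) * (Real.pi / Real.sqrt (b 0)))) := by
  have hπ : (0:ℝ) < π := Real.pi_pos
  have h0I : (0:ℝ) ∈ Icc (-π) π := ⟨by linarith, hπ.le⟩
  obtain ⟨M, hM⟩ := isCompact_Icc.exists_bound_of_continuousOn ha
  have hM0 : 0 ≤ M := le_trans (norm_nonneg _) (hM 0 h0I)
  obtain ⟨θ₀, hθ₀, hmin⟩ := isCompact_Icc.exists_isMinOn (Set.nonempty_Icc.2 (by linarith)) hb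
  set m := b θ₀ with hmdef
  have hm0 : 0 < m := hbpos _ hθ₀
  have hbm : ∀ θ ∈ Icc (-π) π, m ≤ b θ := fun θ hθ => hmin hθ
  set c := min m 1 with hcdef
  have hc0 : 0 < c := lt_min hm0 one_pos
  have hc1 : c ≤ 1 := min_le_right _ _
  have hcm : c ≤ m := min_le_left _ _
  have hb0 : 0 < b 0 := hbpos 0 h0I
  have hmapsto : ∀ ε : ℝ, 0 < ε → ∀ u ∈ Icc (-(π / Real.sqrt ε)) (π / Real.sqrt ε),
      Real.sqrt ε * u ∈ Icc (-π) π := by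
    intro ε hε0 u hu
    have hs : 0 < Real.sqrt ε := Real.sqrt_pos.2 hε0
    have h1 := mul_le_mul_of_nonneg_left hu.1 hs.le
    have h2 := mul_le_mul_of_nonneg_left hu.2 hs.le
    have e1 : Real.sqrt ε * (π / Real.sqrt ε) = π := by field_simp
    constructor
    · calc -π = Real.sqrt ε * (-(π / Real.sqrt ε)) := by rw [mul_neg, e1]
        _ ≤ Real.sqrt ε * u := h1
    · calc Real.sqrt ε * u ≤ Real.sqrt ε * (π / Real.sqrt ε) := h2
        _ = π := e1
  -- the family after the substitution θ = √ε · u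
  set G : ℝ → ℝ → ℝ := fun ε u =>
      (a (Real.sqrt ε * u) / b (Real.sqrt ε * u)) / (1 + b (Real.sqrt ε * u) * u ^ 2) with hGdef
  set F : ℝ → ℝ → ℝ := fun ε u =>
      (Set.Ioc (-(π / Real.sqrt ε)) (π / Real.sqrt ε)).indicator (G ε) u with hFdef
  set L : ℝ → ℝ := fun u => (a 0 / b 0) / (1 + b 0 * u ^ 2) with hLdef
  set bnd : ℝ → ℝ := fun u => (M / m / c) * (1 + u ^ 2)⁻¹ with hbnddef
  -- the uniform bound
  have hbound_pt : ∀ (u θ : ℝ), θ ∈ Icc (-π) π →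
      |(a θ / b θ) / (1 + b θ * u ^ 2)| ≤ bnd u := by
    intro u θ hθ
    have hbθ : 0 < b θ := hbpos θ hθ
    have hd : 0 < 1 + b θ * u ^ 2 := by positivity
    have h1 : |(a θ / b θ) / (1 + b θ * u ^ 2)| = |a θ| / (b θ * (1 + b θ * u ^ 2)) := by
      rw [div_div, abs_div, abs_of_pos (show (0:ℝ) < b θ * (1 + b θ * u ^ 2) by positivity)]
    rw [h1]
    have hden : m * (c * (1 + u ^ 2)) ≤ b θ * (1 + b θ * u ^ 2) := by
      have h2 : c * (1 + u ^ 2) ≤ 1 + b θ * u ^ 2 := by nlinarith [hbm θ hθ, sq_nonneg u]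
      have := hbm θ hθ
      nlinarith [sq_nonneg u]
    calc |a θ| / (b θ * (1 + b θ * u ^ 2)) ≤ M / (m * (c * (1 + u ^ 2))) :=
          div_le_div₀ hM0 (hM θ hθ) (by positivity) hden
      _ = bnd u := by rw [hbnddef, ← div_div, ← div_div, div_eq_mul_inv]
  -- the substitution identity
  have key : ∀ ε ∈ Ioi (0:ℝ),
      Real.sqrt ε * (∫ θ in (-π)..π, (a θ / b θ) * (1 / (ε + b θ * θ ^ 2))) = ∫ u, F ε u := by
    intro ε hε
    have hε0 : 0 < ε := hε
    have hs : 0 < Real.sqrt ε := Real.sqrt_pos.2 hε0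
    have hs2 : Real.sqrt ε ^ 2 = ε := Real.sq_sqrt hε0.le
    have hle : -(π / Real.sqrt ε) ≤ π / Real.sqrt ε := by
      have : 0 < π / Real.sqrt ε := by positivity
      linarith
    have hmaps := hmapsto ε hε0
    have h1 : (∫ u in (-(π / Real.sqrt ε))..(π / Real.sqrt ε),
          (fun θ => (a θ / b θ) * (1 / (ε + b θ * θ ^ 2))) (Real.sqrt ε * u))
        = (Real.sqrt ε)⁻¹ • ∫ θ in (Real.sqrt ε * (-(π / Real.sqrt ε)))..(Real.sqrt ε * (π / Real.sqrt ε)),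
          (a θ / b θ) * (1 / (ε + b θ * θ ^ 2)) :=
      intervalIntegral.integral_comp_mul_left
        (fun θ => (a θ / b θ) * (1 / (ε + b θ * θ ^ 2))) hs.ne'
    have hends : Real.sqrt ε * (π / Real.sqrt ε) = π := by field_simp
    have hends' : Real.sqrt ε * (-(π / Real.sqrt ε)) = -π := by rw [mul_neg, hends]
    rw [hends, hends'] at h1
    have h2 : ∫ u in (-(π / Real.sqrt ε))..(π / Real.sqrt ε), G ε u
        = ε • ∫ u in (-(π / Real.sqrt ε))..(π / Real.sqrt ε),
            (fun θ => (a θ / b θ) * (1 / (ε + b θ * θ ^ 2))) (Real.sqrt ε * u) := by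
      rw [← intervalIntegral.integral_smul]
      apply intervalIntegral.integral_congr
      intro u hu
      rw [Set.uIcc_of_le hle] at hu
      have hmem := hmaps u hu
      have hbu : 0 < b (Real.sqrt ε * u) := hbpos _ hmem
      have hd : 0 < 1 + b (Real.sqrt ε * u) * u ^ 2 := by positivity
      simp only [smul_eq_mul, hGdef]
      rw [mul_pow, hs2]
      rw [show ε + b (Real.sqrt ε * u) * (ε * u ^ 2)
          = ε * (1 + b (Real.sqrt ε * u) * u ^ 2) by ring]
      field_simp
    have h3 : ∫ u, F ε u = ∫ u in (-(π / Real.sqrt ε))..(π / Real.sqrt ε), G ε u := by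
      simp only [hFdef]
      rw [MeasureTheory.integral_indicator measurableSet_Ioc,
        intervalIntegral.integral_of_le hle]
    rw [h3, h2, h1, smul_smul]
    rw [smul_eq_mul]
    have : ε * (Real.sqrt ε)⁻¹ = Real.sqrt ε := by
      rw [← hs2]; field_simp
      rw [Real.sqrt_sq hs.le]
    rw [this]
  -- measurability
  have hmeas : ∀ᶠ ε in nhdsWithin 0 (Set.Ioi 0), AEStronglyMeasurable (F ε) volume := by
    filter_upwards [self_mem_nhdsWithin] with ε hε
    have hε0 : (0:ℝ) < ε := hε
    have hs : 0 < Real.sqrt ε := Real.sqrt_pos.2 hε0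
    have hle : -(π / Real.sqrt ε) ≤ π / Real.sqrt ε := by
      have : 0 < π / Real.sqrt ε := by positivity
      linarith
    have hmaps : Set.MapsTo (fun u => Real.sqrt ε * u)
        (Icc (-(π / Real.sqrt ε)) (π / Real.sqrt ε)) (Icc (-π) π) := fun u hu => hmapsto ε hε0 u hu
    have hcm' : ContinuousOn (fun u : ℝ => Real.sqrt ε * u)
        (Icc (-(π / Real.sqrt ε)) (π / Real.sqrt ε)) :=
      (continuous_const.mul continuous_id).continuousOn
    have hA : ContinuousOn (fun u => a (Real.sqrt ε * u))
        (Icc (-(π / Real.sqrt ε)) (π / Real.sqrt ε)) := ha.comp hcm' hmaps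
    have hB : ContinuousOn (fun u => b (Real.sqrt ε * u))
        (Icc (-(π / Real.sqrt ε)) (π / Real.sqrt ε)) := hb.comp hcm' hmaps
    have hGcont : ContinuousOn (G ε) (Icc (-(π / Real.sqrt ε)) (π / Real.sqrt ε)) := by
      apply ContinuousOn.div
      · exact hA.div hB (fun u hu => (hbpos _ (hmaps hu)).ne')
      · exact continuousOn_const.add (hB.mul (continuous_pow 2).continuousOn)
      · intro u hu
        have : 0 < b (Real.sqrt ε * u) := hbpos _ (hmaps hu)
        positivity
    simp only [hFdef]
    rw [aestronglyMeasurable_indicator_iff measurableSet_Ioc]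
    exact (hGcont.aestronglyMeasurable measurableSet_Icc).mono_measure
      (Measure.restrict_mono Set.Ioc_subset_Icc_self le_rfl)
  -- bound
  have hbound : ∀ᶠ ε in nhdsWithin 0 (Set.Ioi 0),
      ∀ᵐ u : ℝ, ‖F ε u‖ ≤ bnd u := by
    filter_upwards [self_mem_nhdsWithin] with ε hε
    refine MeasureTheory.ae_of_all _ fun u => ?_
    have hε0 : (0:ℝ) < ε := hε
    have hs : 0 < Real.sqrt ε := Real.sqrt_pos.2 hε0
    rw [Real.norm_eq_abs]
    simp only [hFdef]
    by_cases hu : u ∈ Set.Ioc (-(π / Real.sqrt ε)) (π / Real.sqrt ε)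
    · rw [Set.indicator_of_mem hu]
      have hmem : Real.sqrt ε * u ∈ Icc (-π) π :=
        hmapsto ε hε0 u (Set.Ioc_subset_Icc_self hu)
      exact hbound_pt u _ hmem
    · rw [Set.indicator_of_notMem hu, abs_zero]
      rw [hbnddef]
      positivity
  -- integrability of the bound
  have hint : Integrable bnd volume := integrable_inv_one_add_sq.const_mul _
  -- pointwise limit
  have hlim : ∀ᵐ u : ℝ, Tendsto (fun ε => F ε u) (nhdsWithin 0 (Set.Ioi 0)) (nhds (L u)) := by
    refine MeasureTheory.ae_of_all _ fun u => ?_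
    have hsq : Tendsto (fun ε : ℝ => Real.sqrt ε * u) (nhdsWithin 0 (Set.Ioi 0)) (nhds 0) := by
      have h1 : Tendsto Real.sqrt (nhds 0) (nhds 0) := by
        simpa using Real.continuous_sqrt.tendsto 0
      have h2 : Tendsto Real.sqrt (nhdsWithin 0 (Set.Ioi 0)) (nhds 0) :=
        h1.mono_left nhdsWithin_le_nhds
      simpa using h2.mul_const u
    have haC : ContinuousAt a 0 := ha.continuousAt (Icc_mem_nhds (by linarith) hπ)
    have hbC : ContinuousAt b 0 := hb.continuousAt (Icc_mem_nhds (by linarith) hπ)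
    have hA : Tendsto (fun ε => a (Real.sqrt ε * u)) (nhdsWithin 0 (Set.Ioi 0)) (nhds (a 0)) :=
      haC.tendsto.comp hsq
    have hB : Tendsto (fun ε => b (Real.sqrt ε * u)) (nhdsWithin 0 (Set.Ioi 0)) (nhds (b 0)) :=
      hbC.tendsto.comp hsq
    have hden : (0:ℝ) < 1 + b 0 * u ^ 2 := by positivity
    have hGlim : Tendsto (fun ε => G ε u) (nhdsWithin 0 (Set.Ioi 0)) (nhds (L u)) := by
      simp only [hGdef, hLdef]
      exact (hA.div hB hb0.ne').div
        (tendsto_const_nhds.add (hB.mul tendsto_const_nhds)) hden.ne'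
    refine hGlim.congr' ?_
    · -- eventually F ε u = G ε u
      have hδ : (0:ℝ) < (π / (|u| + 1)) ^ 2 := by positivity
      filter_upwards [Ioo_mem_nhdsGT_of_mem (Set.mem_Ico.2 ⟨le_rfl, hδ⟩)] with ε hε
      have hε0 : 0 < ε := hε.1
      have hs : 0 < Real.sqrt ε := Real.sqrt_pos.2 hε0
      have hlt : Real.sqrt ε < π / (|u| + 1) := by
        have := Real.sqrt_lt_sqrt hε0.le hε.2
        rwa [Real.sqrt_sq (by positivity)] at this
      have habs : |u| < π / Real.sqrt ε := by
        rw [lt_div_iff₀ hs]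
        have h2 : Real.sqrt ε * (|u| + 1) < π := by
          rw [← lt_div_iff₀ (by positivity)] at *
          exact hlt
        nlinarith [abs_nonneg u]
      have hu : u ∈ Set.Ioc (-(π / Real.sqrt ε)) (π / Real.sqrt ε) := by
        constructor
        · have := neg_abs_le u; linarith [habs]
        · have := le_abs_self u; linarith [habs]
      simp only [hFdef]
      exact (Set.indicator_of_mem hu _).symm
  -- dominated convergence
  have hDCT := MeasureTheory.tendsto_integral_filter_of_dominated_convergence
    bnd hmeas hbound hint hlim
  -- value of the limit integral
  have hval : ∫ u, L u = (a 0 / b 0) * (π / Real.sqrt (b 0)) := by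
    have hr : 0 < Real.sqrt (b 0) := Real.sqrt_pos.2 hb0
    have hr2 : Real.sqrt (b 0) ^ 2 = b 0 := Real.sq_sqrt hb0.le
    have h1 : ∀ u : ℝ, L u = (a 0 / b 0) * (fun x : ℝ => (1 + x ^ 2)⁻¹) (Real.sqrt (b 0) * u) := by
      intro u
      simp only [hLdef]
      rw [mul_pow, hr2, div_eq_mul_inv]
    rw [show (∫ u, L u) = ∫ u, (a 0 / b 0) * (fun x : ℝ => (1 + x ^ 2)⁻¹) (Real.sqrt (b 0) * u)
        from by simp_rw [h1]]
    rw [MeasureTheory.integral_const_mul]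
    rw [MeasureTheory.Measure.integral_comp_mul_left (fun x : ℝ => (1 + x ^ 2)⁻¹) (Real.sqrt (b 0))]
    rw [integral_univ_inv_one_add_sq]
    rw [abs_of_pos (by positivity), smul_eq_mul]
    field_simp
  rw [hval] at hDCT
  refine hDCT.congr' ?_
  filter_upwards [self_mem_nhdsWithin] with ε hε
  exact (key ε hε).symm
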